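/- Let X be a compact metric space and f : X → X a continuous map. For attractors A and A' of f, the dual repeller operation B ↦ B* = {x ∈ X : ω(x) ∩ B = ∅} satisfies (A ∪ A')* = A* ∩ A'* and (Inv(A ∩ A'))* = A* ∪ A'*. In other words, * is a lattice anti-homomorphism from the lattice of attractors (with join A ∪ A' and meet Inv(A ∩ A')) to the lattice of repellers (with join union and meet intersection). -/

import Mathlib

open Set

/-- The maximal invariant set in `U`: the union of all subsets `S ⊆ U` with `f '' S = S`. -/
def MaxInv {Y : Type*} (f : Y → Y) (U : Set Y) : Set Y :=
  ⋃₀ {S : Set Y | S ⊆ U ∧ f '' S = S}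

/-- The maximal forward invariant set in `U`: the union of all subsets `S ⊆ U`
with `f '' S ⊆ S`. -/
def MaxInvPlus {Y : Type*} (f : Y → Y) (U : Set Y) : Set Y :=
  ⋃₀ {S : Set Y | S ⊆ U ∧ f '' S ⊆ S}

/-- The omega-limit set `ω(U) = ⋂_{n ≥ 0} cl (⋃_{m ≥ n} f^[m] '' U)`. -/
def OmegaLim {Y : Type*} [TopologicalSpace Y] (f : Y → Y) (U : Set Y) : Set Y :=
  ⋂ n : ℕ, closure (⋃ m ≥ n, f^[m] '' U)

/-- The alpha-limit set `α(U) = ⋂_{n ≥ 0} cl (⋃_{m ≥ n} (f^[m]) ⁻¹' U)`. -/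
def AlphaLim {Y : Type*} [TopologicalSpace Y] (f : Y → Y) (U : Set Y) : Set Y :=
  ⋂ n : ℕ, closure (⋃ m ≥ n, f^[m] ⁻¹' U)

/-- A trapping region: a forward invariant set `U` with `f^[n] '' cl U ⊆ int U`
for some `n ≥ 1`. -/
def IsTrappingRegion {Y : Type*} [TopologicalSpace Y] (f : Y → Y) (U : Set Y) : Prop :=
  f '' U ⊆ U ∧ ∃ n : ℕ, 1 ≤ n ∧ f^[n] '' closure U ⊆ interior U

/-- An attractor: `A = Inv(U)` for some trapping region `U`. -/
def IsAttractor {Y : Type*} [TopologicalSpace Y] (f : Y → Y) (A : Set Y) : Prop :=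
  ∃ U : Set Y, IsTrappingRegion f U ∧ A = MaxInv f U

/-- An attracting neighborhood: `ω(U) ⊆ int U`. -/
def IsAttractingNbhd {Y : Type*} [TopologicalSpace Y] (f : Y → Y) (U : Set Y) : Prop :=
  OmegaLim f U ⊆ interior U

/-- A repelling region: a backward invariant set `U` with `(f^[n]) ⁻¹' cl U ⊆ int U`
for some `n ≥ 1`. -/
def IsRepellingRegion {Y : Type*} [TopologicalSpace Y] (f : Y → Y) (U : Set Y) : Prop :=
  f ⁻¹' U ⊆ U ∧ ∃ n : ℕ, 1 ≤ n ∧ f^[n] ⁻¹' closure U ⊆ interior U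

/-- A repeller: `R = Inv⁺(U)` for some repelling region `U`. -/
def IsRepeller {Y : Type*} [TopologicalSpace Y] (f : Y → Y) (R : Set Y) : Prop :=
  ∃ U : Set Y, IsRepellingRegion f U ∧ R = MaxInvPlus f U

/-- A repelling neighborhood: `α(U) ⊆ int U`. -/
def IsRepellingNbhd {Y : Type*} [TopologicalSpace Y] (f : Y → Y) (U : Set Y) : Prop :=
  AlphaLim f U ⊆ interior U

/-- A backward orbit: a sequence `γ : ℕ → Y` with `f (γ (k+1)) = γ k` for all `k`.
A backward orbit through `x` additionally satisfies `γ 0 = x`. -/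
def IsBackwardOrbit {Y : Type*} (f : Y → Y) (γ : ℕ → Y) : Prop :=
  ∀ k : ℕ, f (γ (k + 1)) = γ k

/-- The orbital alpha-limit set `α_o(γ) = ⋂_{n ≥ 0} cl {γ m : m ≥ n}`. -/
def OrbAlpha {Y : Type*} [TopologicalSpace Y] (γ : ℕ → Y) : Set Y :=
  ⋂ n : ℕ, closure (γ '' {m : ℕ | n ≤ m})

/-- The dual repeller of an attractor `A`: `A* = {x : ω(x) ∩ A = ∅}`. -/
def DualRepeller {Y : Type*} [TopologicalSpace Y] (f : Y → Y) (A : Set Y) : Set Y :=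
  {x : Y | OmegaLim f {x} ∩ A = ∅}

/-- The dual attractor of a repeller `R`:
`R* = {x : ∃ backward orbit γ through x with α_o(γ) ∩ R = ∅}`. -/
def DualAttractor {Y : Type*} [TopologicalSpace Y] (f : Y → Y) (R : Set Y) : Set Y :=
  {x : Y | ∃ γ : ℕ → Y, γ 0 = x ∧ IsBackwardOrbit f γ ∧ OrbAlpha γ ∩ R = ∅}
section AuxAbstract

variable {Y : Type*}

lemma maxInv_subset (f : Y → Y) (U : Set Y) : MaxInv f U ⊆ U :=
  sUnion_subset fun _ hS => hS.1

lemma subset_maxInv {f : Y → Y} {U S : Set Y} (h1 : S ⊆ U) (h2 : f '' S = S) :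
    S ⊆ MaxInv f U :=
  subset_sUnion_of_mem ⟨h1, h2⟩

lemma image_maxInv (f : Y → Y) (U : Set Y) : f '' MaxInv f U = MaxInv f U := by
  apply Subset.antisymm
  · rintro _ ⟨z, hz, rfl⟩
    obtain ⟨S, ⟨hSU, hSf⟩, hzS⟩ := hz
    exact ⟨S, ⟨hSU, hSf⟩, hSf ▸ mem_image_of_mem f hzS⟩
  · rintro y ⟨S, ⟨hSU, hSf⟩, hy⟩
    rw [← hSf] at hy
    obtain ⟨z, hz, rfl⟩ := hy
    exact mem_image_of_mem f ⟨S, ⟨hSU, hSf⟩, hz⟩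

lemma iterate_image_eq {f : Y → Y} {S : Set Y} (h : f '' S = S) (n : ℕ) :
    f^[n] '' S = S := by
  induction n with
  | zero => simp
  | succ n ih => rw [Function.iterate_succ', image_comp, ih, h]

lemma iterate_image_subset {f : Y → Y} {U : Set Y} (h : f '' U ⊆ U) (n : ℕ) :
    f^[n] '' U ⊆ U := by
  induction n with
  | zero => simp
  | succ n ih =>
    rw [Function.iterate_succ', image_comp]
    exact (image_mono (f := f) ih).trans h

end AuxAbstract

section AuxTop

variable {X : Type*} [MetricSpace X] [CompactSpace X] {f : X → X}

omit [MetricSpace X] [CompactSpace X] in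
lemma orb_antitone (f : X → X) (x : X) {n n' : ℕ} (h : n ≤ n') :
    (⋃ m ≥ n', f^[m] '' ({x} : Set X)) ⊆ ⋃ m ≥ n, f^[m] '' ({x} : Set X) := by
  intro w hw
  simp only [mem_iUnion, image_singleton, mem_singleton_iff] at hw ⊢
  obtain ⟨m, hm, rfl⟩ := hw
  exact ⟨m, le_trans h hm, rfl⟩

lemma omega_nonempty (f : X → X) (x : X) : (OmegaLim f {x}).Nonempty := by
  apply IsCompact.nonempty_iInter_of_sequence_nonempty_isCompact_isClosed
  · intro n
    exact closure_mono (orb_antitone f x (Nat.le_succ n))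
  · intro n
    refine ⟨f^[n] x, subset_closure ?_⟩
    simp only [mem_iUnion, image_singleton, mem_singleton_iff]
    exact ⟨n, le_rfl, rfl⟩
  · exact isClosed_closure.isCompact
  · intro n; exact isClosed_closure

lemma omega_invariant (hf : Continuous f) (x : X) :
    f '' OmegaLim f {x} = OmegaLim f {x} := by
  apply Subset.antisymm
  · rintro _ ⟨z, hz, rfl⟩
    simp only [OmegaLim, mem_iInter] at hz ⊢
    intro n
    have h2 : f z ∈ closure (f '' (⋃ m ≥ n, f^[m] '' ({x} : Set X))) :=
      image_closure_subset_closure_image hf (mem_image_of_mem f (hz n))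
    refine closure_mono ?_ h2
    intro w hw
    simp only [mem_image, mem_iUnion, image_singleton, mem_singleton_iff] at hw ⊢
    obtain ⟨v, ⟨m, hm, rfl⟩, rfl⟩ := hw
    exact ⟨m + 1, le_trans hm (Nat.le_succ m), (Function.iterate_succ_apply' f m x).symm⟩
  · intro y hy
    set K : ℕ → Set X := fun n => closure (⋃ m ≥ n, f^[m] '' ({x} : Set X)) with hK
    have hyK : ∀ n, y ∈ f '' K n := by
      intro n
      have h1 : y ∈ K (n + 1) := by
        simpa [OmegaLim, hK] using mem_iInter.mp hy (n + 1)
      have hsub : (⋃ m ≥ n + 1, f^[m] '' ({x} : Set X)) ⊆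
          f '' (⋃ m ≥ n, f^[m] '' ({x} : Set X)) := by
        intro w hw
        simp only [mem_iUnion, image_singleton, mem_singleton_iff, mem_image] at hw ⊢
        obtain ⟨m, hm, rfl⟩ := hw
        rcases m with _ | k
        · omega
        · exact ⟨f^[k] x, ⟨k, by omega, rfl⟩, (Function.iterate_succ_apply' f k x).symm⟩
      have hcl : IsClosed (f '' K n) := (isClosed_closure.isCompact.image hf).isClosed
      have : K (n + 1) ⊆ f '' K n := by
        rw [← hcl.closure_eq]
        exact closure_mono (hsub.trans (image_mono (f := f) subset_closure))
      exact this h1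
    set C : ℕ → Set X := fun n => K n ∩ f ⁻¹' {y} with hC
    have hCne : ∀ n, (C n).Nonempty := by
      intro n
      obtain ⟨z, hz, hfz⟩ := hyK n
      exact ⟨z, hz, by simpa using hfz⟩
    have hCcl : ∀ n, IsClosed (C n) := fun n =>
      isClosed_closure.inter (isClosed_singleton.preimage hf)
    have hCmono : ∀ n, C (n + 1) ⊆ C n := fun n =>
      inter_subset_inter_left _ (closure_mono (orb_antitone f x (Nat.le_succ n)))
    obtain ⟨z, hz⟩ := IsCompact.nonempty_iInter_of_sequence_nonempty_isCompact_isClosed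
      C hCmono hCne (hCcl 0).isCompact hCcl
    refine ⟨z, ?_, ?_⟩
    · simp only [OmegaLim, mem_iInter]
      intro n
      exact (mem_iInter.mp hz n).1
    · simpa using (mem_iInter.mp hz 0).2

lemma omega_subset_of_attractor (hf : Continuous f) {A : Set X} (hA : IsAttractor f A)
    (x : X) (hne : (OmegaLim f {x} ∩ A).Nonempty) : OmegaLim f {x} ⊆ A := by
  obtain ⟨U, ⟨hfwd, n, _, hn⟩, rfl⟩ := hA
  have hAU : MaxInv f U ⊆ U := maxInv_subset f U
  have hAint : MaxInv f U ⊆ interior U := by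
    intro a ha
    have : a ∈ f^[n] '' MaxInv f U := by
      rw [iterate_image_eq (image_maxInv f U)]; exact ha
    exact hn (image_mono (hAU.trans subset_closure) this)
  obtain ⟨y, hyω, hyA⟩ := hne
  have hex : ∃ m, f^[m] x ∈ U := by
    have hy0 : y ∈ closure (⋃ m ≥ 0, f^[m] '' ({x} : Set X)) := by
      simpa [OmegaLim] using mem_iInter.mp hyω 0
    obtain ⟨w, hw1, hw2⟩ :=
      mem_closure_iff.mp hy0 (interior U) isOpen_interior (hAint hyA)
    simp only [mem_iUnion, image_singleton, mem_singleton_iff] at hw2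
    obtain ⟨m, _, rfl⟩ := hw2
    exact ⟨m, interior_subset hw1⟩
  obtain ⟨m, hm⟩ := hex
  have hωcl : OmegaLim f {x} ⊆ closure U := by
    intro z hz
    have hz' : z ∈ closure (⋃ k ≥ m, f^[k] '' ({x} : Set X)) := by
      simpa [OmegaLim] using mem_iInter.mp hz m
    refine (closure_mono ?_ hz' : z ∈ closure U)
    intro w hw
    simp only [mem_iUnion, image_singleton, mem_singleton_iff] at hw
    obtain ⟨k, hk, rfl⟩ := hw
    obtain ⟨j, rfl⟩ := Nat.exists_eq_add_of_le hk
    rw [add_comm, Function.iterate_add_apply]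
    exact iterate_image_subset hfwd j ⟨_, hm, rfl⟩
  have hωinv : f '' OmegaLim f {x} = OmegaLim f {x} := omega_invariant hf x
  have hωU : OmegaLim f {x} ⊆ U := by
    intro z hz
    have : z ∈ f^[n] '' OmegaLim f {x} := by
      rw [iterate_image_eq hωinv]; exact hz
    exact interior_subset (hn (image_mono hωcl this))
  exact subset_maxInv hωU hωinv

end AuxTop

/-- The dual repeller operation is a lattice anti-homomorphism
from attractors to repellers. -/
theorem dualRepeller_anti_hom
    {X : Type*} [MetricSpace X] [CompactSpace X]
    (f : X → X) (hf : Continuous f) (A A' : Set X)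
    (hA : IsAttractor f A) (hA' : IsAttractor f A') :
    DualRepeller f (A ∪ A') = DualRepeller f A ∩ DualRepeller f A' ∧
    DualRepeller f (MaxInv f (A ∩ A')) = DualRepeller f A ∪ DualRepeller f A' := by
  constructor
  · ext z
    simp only [DualRepeller, mem_setOf_eq, mem_inter_iff]
    rw [inter_union_distrib_left, union_empty_iff]
  · apply Subset.antisymm
    · intro z hz
      simp only [DualRepeller, mem_setOf_eq, mem_union] at hz ⊢
      by_contra hcon
      push_neg at hcon
      obtain ⟨h1, h2⟩ := hcon
      have hsubA := omega_subset_of_attractor hf hA z h1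
      have hsubA' := omega_subset_of_attractor hf hA' z h2
      have hsub : OmegaLim f {z} ⊆ MaxInv f (A ∩ A') :=
        subset_maxInv (subset_inter hsubA hsubA') (omega_invariant hf z)
      obtain ⟨w, hw⟩ := omega_nonempty f z
      have hmem : w ∈ OmegaLim f {z} ∩ MaxInv f (A ∩ A') := ⟨hw, hsub hw⟩
      rw [hz] at hmem
      exact hmem
    · intro z hz
      simp only [DualRepeller, mem_union, mem_setOf_eq] at hz ⊢
      have hsub : MaxInv f (A ∩ A') ⊆ A ∩ A' := maxInv_subset f _
      rw [eq_empty_iff_forall_notMem]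
      rcases hz with h | h
      · rw [eq_empty_iff_forall_notMem] at h
        exact fun w hw => h w ⟨hw.1, (hsub hw.2).1⟩
      · rw [eq_empty_iff_forall_notMem] at h
        exact fun w hw => h w ⟨hw.1, (hsub hw.2).2⟩
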